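/- Let Λ > 0 and λ₀ = Λ^{1/(2p)}. Then there exists a complex polynomial A of degree n such that Ā(X)·A(X) = (X² − λ₀²)·(X^{2n−2} − Λ·X^{2n−2p−2}), where Ā denotes the polynomial whose coefficients are the complex conjugates of the coefficients of A. -/

import Mathlib

noncomputable section

open Polynomial

theorem stmt6 (p n : ℕ) (hp : 1 ≤ p) (hpn : p < n)
    (Λ : ℝ) (hΛ : 0 < Λ) (lam0 : ℝ) (hlam0 : lam0 = Λ ^ ((1 : ℝ) / (2 * p))) :
    ∃ A : Polynomial ℂ, A.natDegree = n ∧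
      A.map (starRingEnd ℂ) * A =
        (Polynomial.X ^ 2 - Polynomial.C ((lam0 : ℂ) ^ 2)) *
          (Polynomial.X ^ (2 * n - 2)
            - Polynomial.C ((Λ : ℂ)) * Polynomial.X ^ (2 * n - 2 * p - 2)) := by
  have hp0 : 0 < p := hp
  have h2p : (2 * p) ≠ 0 := by omega
  set m := n - p - 1 with hm
  -- λ₀ ^ (2p) = Λ
  have hlam_pow : lam0 ^ (2 * p) = Λ := by
    rw [hlam0, ← Real.rpow_natCast, ← Real.rpow_mul hΛ.le]
    rw [show ((1 : ℝ) / (2 * p)) * ((2 * p : ℕ) : ℝ) = 1 by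
      push_cast
      field_simp]
    exact Real.rpow_one Λ
  have hlam_powC : ((lam0 : ℂ)) ^ (2 * p) = (Λ : ℂ) := by
    rw [← Complex.ofReal_pow, hlam_pow]
  -- primitive 2p-th root of unity
  set ζ : ℂ := Complex.exp (2 * Real.pi * Complex.I / (2 * p)) with hζdef
  have hζ : IsPrimitiveRoot ζ (2 * p) := by
    have := Complex.isPrimitiveRoot_exp (2 * p) h2p
    simpa [hζdef] using this
  have hζ2p : ζ ^ (2 * p) = 1 := hζ.pow_eq_one
  have hζne : ζ ≠ 0 := by
    intro h
    rw [h, zero_pow h2p] at hζ2p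
    exact zero_ne_one hζ2p
  have hζp : ζ ^ p = -1 := by
    rw [hζdef, ← Complex.exp_nat_mul]
    rw [show (p : ℂ) * (2 * Real.pi * Complex.I / (2 * p)) = Real.pi * Complex.I by
      have hpc : (p : ℂ) ≠ 0 := Nat.cast_ne_zero.2 (by omega)
      field_simp]
    exact Complex.exp_pi_mul_I
  have habs : ‖ζ‖ = 1 := by
    have hpc : (p : ℂ) ≠ 0 := Nat.cast_ne_zero.2 (by omega)
    have harg : 2 * (Real.pi : ℂ) * Complex.I / (2 * (p : ℂ))
        = ((Real.pi / p : ℝ) : ℂ) * Complex.I := by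
      push_cast
      field_simp
    rw [hζdef, harg]
    exact Complex.norm_exp_ofReal_mul_I _
  have hconjk : ∀ k, k ≤ 2 * p → (starRingEnd ℂ) (ζ ^ k) = ζ ^ (2 * p - k) := by
    intro k hk
    have hz : ζ ^ k ≠ 0 := pow_ne_zero _ hζne
    have h1 : (starRingEnd ℂ) (ζ ^ k) * ζ ^ k = 1 := by
      rw [mul_comm, Complex.mul_conj, Complex.normSq_eq_norm_sq, norm_pow, habs, one_pow]
      norm_num
    have h2 : ζ ^ (2 * p - k) * ζ ^ k = 1 := by
      rw [← pow_add, show 2 * p - k + k = 2 * p by omega, hζ2p]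
    exact mul_right_cancel₀ hz (h1.trans h2.symm)
  -- the polynomial A
  refine ⟨X ^ m * (X - C (lam0 : ℂ)) * (X + C (lam0 : ℂ)) *
      ∏ k ∈ Finset.Ico 1 p, (X - C (ζ ^ k * (lam0 : ℂ))), ?_, ?_⟩
  · -- degree
    have hmon1 : (X ^ m : ℂ[X]).Monic := monic_X_pow m
    have hmon2 : (X - C (lam0 : ℂ)).Monic := monic_X_sub_C _
    have hmon3 : (X + C (lam0 : ℂ)).Monic := monic_X_add_C _
    have hmonP : (∏ k ∈ Finset.Ico 1 p, (X - C (ζ ^ k * (lam0 : ℂ)))).Monic :=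
      monic_prod_of_monic _ _ (fun k _ => monic_X_sub_C _)
    have hprodDeg : (∏ k ∈ Finset.Ico 1 p, (X - C (ζ ^ k * (lam0 : ℂ)))).natDegree = p - 1 := by
      rw [Polynomial.natDegree_prod _ _ (fun k _ => X_sub_C_ne_zero _)]
      simp only [natDegree_X_sub_C, Finset.sum_const, smul_eq_mul, mul_one, Nat.card_Ico]
    rw [Monic.natDegree_mul ((hmon1.mul hmon2).mul hmon3) hmonP,
      Monic.natDegree_mul (hmon1.mul hmon2) hmon3,
      Monic.natDegree_mul hmon1 hmon2,
      natDegree_X_pow, natDegree_X_sub_C, natDegree_X_add_C, hprodDeg]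
    omega
  · -- the product identity
    have hmap : (X ^ m * (X - C (lam0 : ℂ)) * (X + C (lam0 : ℂ)) *
        ∏ k ∈ Finset.Ico 1 p, (X - C (ζ ^ k * (lam0 : ℂ)))).map (starRingEnd ℂ)
        = X ^ m * (X - C (lam0 : ℂ)) * (X + C (lam0 : ℂ)) *
            ∏ k ∈ Finset.Ico 1 p, (X - C (ζ ^ (2 * p - k) * (lam0 : ℂ))) := by
      simp only [Polynomial.map_mul, Polynomial.map_pow, Polynomial.map_sub,
        Polynomial.map_add, Polynomial.map_X, Polynomial.map_C, Polynomial.map_prod,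
        map_mul, Complex.conj_ofReal]
      congr 1
      refine Finset.prod_congr rfl fun k hk => ?_
      simp only [Finset.mem_Ico] at hk
      rw [hconjk k (by omega)]
    have hreindex : (∏ k ∈ Finset.Ico 1 p, (X - C (ζ ^ (2 * p - k) * (lam0 : ℂ))))
        = ∏ k ∈ Finset.Ico (p + 1) (2 * p), (X - C (ζ ^ k * (lam0 : ℂ))) := by
      refine Finset.prod_nbij' (fun k => 2 * p - k) (fun k => 2 * p - k) ?_ ?_ ?_ ?_ ?_
      · intro a ha
        simp only [Finset.mem_Ico] at ha ⊢
        omega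
      · intro a ha
        simp only [Finset.mem_Ico] at ha ⊢
        omega
      · intro a ha
        simp only [Finset.mem_Ico] at ha
        show 2 * p - (2 * p - a) = a
        omega
      · intro a ha
        simp only [Finset.mem_Ico] at ha
        show 2 * p - (2 * p - a) = a
        omega
      · intro a ha
        rfl
    have hfull : (X : ℂ[X]) ^ (2 * p) - C ((Λ : ℂ)) =
        ∏ k ∈ Finset.range (2 * p), (X - C (ζ ^ k * (lam0 : ℂ))) :=
      X_pow_sub_C_eq_prod hζ (by omega) hlam_powC
    have hsplit : (X : ℂ[X]) ^ (2 * p) - C ((Λ : ℂ)) =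
        (X - C (lam0 : ℂ)) * (∏ k ∈ Finset.Ico 1 p, (X - C (ζ ^ k * (lam0 : ℂ)))) *
          ((X + C (lam0 : ℂ)) *
            ∏ k ∈ Finset.Ico (p + 1) (2 * p), (X - C (ζ ^ k * (lam0 : ℂ)))) := by
      rw [hfull, Finset.range_eq_Ico,
        ← Finset.prod_Ico_consecutive _ (Nat.zero_le p) (by omega : p ≤ 2 * p),
        Finset.prod_eq_prod_Ico_succ_bot (by omega : 0 < p),
        Finset.prod_eq_prod_Ico_succ_bot (by omega : p < 2 * p)]
      simp only [pow_zero, one_mul, hζp, neg_mul, map_neg, sub_neg_eq_add]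
    rw [hmap, hreindex]
    rw [show 2 * n - 2 = 2 * m + 2 * p by omega, show 2 * n - 2 * p - 2 = 2 * m by omega]
    have hRHS : (X : ℂ[X]) ^ (2 * m + 2 * p) - C ((Λ : ℂ)) * X ^ (2 * m)
        = X ^ (2 * m) * ((X : ℂ[X]) ^ (2 * p) - C ((Λ : ℂ))) := by ring
    rw [hRHS, hsplit, show Polynomial.C ((lam0 : ℂ) ^ 2) = (Polynomial.C (lam0 : ℂ)) ^ 2 from
      map_pow _ _ _]
    ring
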